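/- Let θ ∈ (0,1), c > 0, k₀ ∈ ℝ, and let Z : [k₀,∞) → [0,∞) be continuous with Z(k) → 0 as k → ∞. Suppose 0 < ω < (1−θ)·(θ/c)^{θ/(1−θ)} and Z(k)^θ ≤ ω + c·Z(k) for every k ≥ k₀. Then there exists Z⁻ with 0 < Z⁻ < (θ/c)^{1/(1−θ)}, satisfying (Z⁻)^θ = ω + c·Z⁻, such that Z(k) ≤ Z⁻ for every k ≥ k₀. -/

import Mathlib

/-- Continuity argument for maximal regularity: a continuous `Z ≥ 0` vanishing at
infinity and satisfying `Z^θ ≤ ω + cZ` with `ω` below the critical threshold stays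
below the smaller root `Z⁻` of `Z^θ = ω + cZ`. -/
theorem stmt10 (θ c ω k₀ : ℝ) (hθ : θ ∈ Set.Ioo (0 : ℝ) 1) (hc : 0 < c)
    (Z : ℝ → ℝ)
    (hZcont : ContinuousOn Z (Set.Ici k₀))
    (hZnn : ∀ k, k₀ ≤ k → 0 ≤ Z k)
    (hZlim : Filter.Tendsto Z Filter.atTop (nhds 0))
    (hω : 0 < ω) (hωsmall : ω < (1 - θ) * (θ / c) ^ (θ / (1 - θ)))
    (hineq : ∀ k, k₀ ≤ k → (Z k) ^ θ ≤ ω + c * Z k) :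
    ∃ Zm : ℝ, 0 < Zm ∧ Zm < (θ / c) ^ (1 / (1 - θ)) ∧
      Zm ^ θ = ω + c * Zm ∧ ∀ k, k₀ ≤ k → Z k ≤ Zm := by
  obtain ⟨hθ0, hθ1⟩ := hθ
  have h1θ : (0:ℝ) < 1 - θ := by linarith
  set f : ℝ → ℝ := fun x => x ^ θ - c * x with hf
  have hfc : Continuous f := by
    apply Continuous.sub _ (continuous_const.mul continuous_id)
    rw [continuous_iff_continuousAt]
    exact fun x => Real.continuousAt_rpow_const x θ (Or.inr hθ0.le)
  set Zs : ℝ := (θ / c) ^ (1 / (1 - θ)) with hZs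
  have hdiv : (0:ℝ) < θ / c := div_pos hθ0 hc
  have hZspos : 0 < Zs := Real.rpow_pos_of_pos hdiv _
  have hZsθ : Zs ^ θ = (θ / c) ^ (θ / (1 - θ)) := by
    rw [hZs, ← Real.rpow_mul hdiv.le,
      show 1 / (1 - θ) * θ = θ / (1 - θ) from by ring]
  have hcZs : c * Zs = θ * (θ / c) ^ (θ / (1 - θ)) := by
    have h1 : 1 / (1 - θ) = 1 + θ / (1 - θ) := by field_simp; ring
    rw [hZs, h1, Real.rpow_add hdiv, Real.rpow_one]
    field_simp
  have hfZs : ω < f Zs := by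
    have : f Zs = (1 - θ) * (θ / c) ^ (θ / (1 - θ)) := by
      simp only [hf, hZsθ, hcZs]; ring
    linarith [this ▸ hωsmall]
  -- the smaller root Zm
  set S : Set ℝ := Set.Icc 0 Zs ∩ f ⁻¹' Set.Iic ω with hS
  have hScomp : IsCompact S :=
    isCompact_Icc.inter_right (isClosed_Iic.preimage hfc)
  have hSne : S.Nonempty := by
    refine ⟨0, ⟨le_refl _, hZspos.le⟩, ?_⟩
    simp [hf, Real.zero_rpow hθ0.ne', hω.le]
  set Zm : ℝ := sSup S with hZm
  have hZmS : Zm ∈ S := hScomp.sSup_mem hSne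
  have hZmZs : Zm < Zs :=
    lt_of_le_of_ne hZmS.1.2 (fun h => absurd hZmS.2 (by simp [h, not_le.mpr hfZs]))
  -- everything in Icc 0 Zs above Zm has f > ω
  have hgap1 : ∀ x, Zm < x → x ≤ Zs → ω < f x := by
    intro x hx hx2
    by_contra h
    push_neg at h
    exact absurd (le_csSup hScomp.bddAbove ⟨⟨le_trans hZmS.1.1 hx.le, hx2⟩, h⟩)
      (not_le.mpr hx)
  have hfZm : f Zm = ω := by
    refine le_antisymm hZmS.2 ?_
    have htd : Filter.Tendsto f (nhdsWithin Zm (Set.Ioi Zm)) (nhds (f Zm)) :=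
      hfc.continuousAt.tendsto.mono_left nhdsWithin_le_nhds
    refine ge_of_tendsto htd ?_
    filter_upwards [Ioo_mem_nhdsGT_of_mem ⟨le_refl Zm, hZmZs⟩] with x hx
    exact (hgap1 x hx.1 hx.2.le).le
  have hZmpos : 0 < Zm := by
    rcases lt_or_eq_of_le hZmS.1.1 with h | h
    · exact h
    · exfalso
      have : f Zm = 0 := by simp [hf, ← h, Real.zero_rpow hθ0.ne']
      linarith [hfZm ▸ this]
  -- the larger root region: find x₁ ≥ Zs with f x₁ ≤ 0
  set b : ℝ := c ^ (-(1 / (1 - θ))) with hb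
  set x₁ : ℝ := max Zs b with hx₁
  have hbpos : 0 < b := Real.rpow_pos_of_pos hc _
  have hx₁pos : 0 < x₁ := lt_of_lt_of_le hZspos (le_max_left _ _)
  have hfx₁ : f x₁ ≤ 0 := by
    have h1 : x₁ ^ (θ - 1) ≤ c := by
      have h2 : x₁ ^ (θ - 1) ≤ b ^ (θ - 1) :=
        Real.rpow_le_rpow_of_nonpos hbpos (le_max_right _ _) (by linarith)
      have h3 : b ^ (θ - 1) = c := by
        rw [hb, ← Real.rpow_mul hc.le]
        have : -(1 / (1 - θ)) * (θ - 1) = 1 := by field_simp; ring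
        rw [this, Real.rpow_one]
      linarith [h3 ▸ h2]
    have h4 : x₁ ^ θ = x₁ ^ (θ - 1) * x₁ := by
      rw [← Real.rpow_add_one hx₁pos.ne' (θ - 1)]; ring_nf
    have : x₁ ^ θ ≤ c * x₁ := by
      rw [h4]
      exact mul_le_mul_of_nonneg_right h1 hx₁pos.le
    simp only [hf]; linarith
  set T : Set ℝ := Set.Icc Zs x₁ ∩ f ⁻¹' Set.Iic ω with hT
  have hTcomp : IsCompact T :=
    isCompact_Icc.inter_right (isClosed_Iic.preimage hfc)
  have hTne : T.Nonempty := ⟨x₁, ⟨le_max_left _ _, le_refl _⟩, by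
    simpa using hfx₁.trans hω.le⟩
  set Zp : ℝ := sInf T with hZp
  have hZpT : Zp ∈ T := hTcomp.sInf_mem hTne
  have hZsZp : Zs < Zp :=
    lt_of_le_of_ne hZpT.1.1 (fun h => absurd hZpT.2 (by simp [← h, not_le.mpr hfZs]))
  have hgap2 : ∀ x, Zs ≤ x → x < Zp → ω < f x := by
    intro x hx hx2
    by_contra h
    push_neg at h
    exact absurd (csInf_le hTcomp.bddBelow ⟨⟨hx, hx2.le.trans hZpT.1.2⟩, h⟩)
      (not_le.mpr hx2)
  have hgap : ∀ x, Zm < x → x < Zp → ω < f x := by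
    intro x hx hx2
    rcases le_or_gt x Zs with h | h
    · exact hgap1 x hx h
    · exact hgap2 x h.le hx2
  -- main conclusion
  refine ⟨Zm, hZmpos, hZmZs, by simp only [hf] at hfZm; linarith, ?_⟩
  intro k hk
  by_contra hcon
  push_neg at hcon
  have hfZk : f (Z k) ≤ ω := by
    have := hineq k hk; simp only [hf]; linarith
  have hZkZp : Zp ≤ Z k := by
    by_contra h
    push_neg at h
    exact absurd hfZk (not_le.mpr (hgap _ hcon h))
  -- find k₂ ≥ k with Z k₂ < Zm
  have hev : ∀ᶠ x in Filter.atTop, Z x < Zm :=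
    hZlim.eventually_lt_const hZmpos
  obtain ⟨a, ha⟩ := hev.exists_forall_of_atTop
  set k₂ : ℝ := max k a with hk₂
  have hkk₂ : k ≤ k₂ := le_max_left _ _
  have hZk₂ : Z k₂ < Zm := ha k₂ (le_max_right _ _)
  set v : ℝ := (Zm + Zp) / 2 with hv
  have hv1 : Zm < v := by simp only [hv]; linarith [hZmZs.trans hZsZp]
  have hv2 : v < Zp := by simp only [hv]; linarith [hZmZs.trans hZsZp]
  have hsub : Set.Icc k k₂ ⊆ Set.Ici k₀ := fun x hx => hk.trans hx.1
  have hiv := intermediate_value_Icc' hkk₂ (hZcont.mono hsub)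
  have hvmem : v ∈ Set.Icc (Z k₂) (Z k) := ⟨by linarith, by linarith⟩
  obtain ⟨k₃, hk₃, hZk₃⟩ := hiv hvmem
  have hk₃k₀ : k₀ ≤ k₃ := hk.trans hk₃.1
  have : f (Z k₃) ≤ ω := by
    have := hineq k₃ hk₃k₀; simp only [hf]; linarith
  rw [hZk₃] at this
  exact absurd this (not_le.mpr (hgap v hv1 hv2))
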